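/- Let G(f,g) = ‖f‖²‖g‖² - (f,g)² denote the Gram determinant of f, g in a real Hilbert space H, and let A be a bounded invertible operator on H with G(Af, Ag) ≥ c·G(f,g) for some c > 0. Define σ(t) = ‖A1_{[0,t]}‖ on H = L²([0,1]) and λ(s,t) = (A1_{[0,s]}, A1_{[0,t]})/(σ(s)σ(t)). Then for 0 < s < t ≤ 1, 1/(√(1-|λ(s,t)|) σ(s) σ(t)) ≤ √2/(√c √(s(t-s))). -/

import Mathlib

open MeasureTheory

/-- Lebesgue measure restricted to `[0,1]`. -/
noncomputable def mu01 : Measure ℝ := volume.restrict (Set.Icc (0:ℝ) 1)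

/-- The indicator function `1_{[0,t]}` as an element of `L²([0,1])`. -/
noncomputable def ind (t : ℝ) : Lp ℝ 2 mu01 :=
  indicatorConstLp 2 (measurableSet_Icc (a := (0:ℝ)) (b := t))
    (by
      have : IsFiniteMeasure mu01 := by unfold mu01; infer_instance
      exact measure_ne_top mu01 _) (1 : ℝ)


lemma mu01_Icc (u : ℝ) (hu1 : u ≤ 1) : mu01 (Set.Icc 0 u) = ENNReal.ofReal u := by
  unfold mu01
  rw [Measure.restrict_apply measurableSet_Icc, Set.Icc_inter_Icc]
  simp [min_eq_left hu1, Real.volume_Icc]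

lemma norm_ind_sq (u : ℝ) (hu : 0 ≤ u) (hu1 : u ≤ 1) : ‖ind u‖ ^ 2 = u := by
  unfold ind
  rw [norm_indicatorConstLp (by norm_num) (by norm_num), Measure.real, mu01_Icc u hu1]
  rw [ENNReal.toReal_ofReal hu]
  norm_num
  rw [← Real.rpow_natCast _ 2, ← Real.rpow_mul hu]
  norm_num

lemma inner_ind (u v : ℝ) (hu : 0 ≤ u) (huv : u ≤ v) (hv1 : v ≤ 1) :
    (inner ℝ (ind u) (ind v) : ℝ) = u := by
  unfold ind
  rw [L2.inner_indicatorConstLp_one measurableSet_Icc _ _]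
  have hne : mu01 (Set.Icc (0:ℝ) v) ≠ ⊤ := by
    have : IsFiniteMeasure mu01 := by unfold mu01; infer_instance
    exact measure_ne_top mu01 _
  have h1 : ∀ᵐ x ∂mu01, x ∈ Set.Icc (0:ℝ) u →
      (indicatorConstLp 2 (measurableSet_Icc (a := (0:ℝ)) (b := v)) hne (1:ℝ) : Lp ℝ 2 mu01) x
        = 1 := by
    filter_upwards [indicatorConstLp_coeFn (p := 2) (μ := mu01)
      (hs := measurableSet_Icc (a := (0:ℝ)) (b := v))
      (hμs := hne) (c := (1:ℝ))] with x hx hxu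
    rw [hx, Set.indicator_of_mem]
    exact ⟨hxu.1, hxu.2.trans huv⟩
  rw [setIntegral_congr_ae measurableSet_Icc h1]
  simp [Measure.real, mu01_Icc u (le_trans huv hv1), ENNReal.toReal_ofReal hu]

/-- If `A` is a bounded operator on `H = L²([0,1])` whose Gram determinants satisfy
`G(Af, Ag) ≥ c G(f,g)`, with `σ(t) = ‖A 1_{[0,t]}‖ > 0` on `(0,1]` and
`λ(s,t) = (A1_{[0,s]}, A1_{[0,t]})/(σ(s)σ(t))`, then for `0 < s < t ≤ 1`,
`1/(√(1-|λ|) σ(s) σ(t)) ≤ √2/(√c √(s(t-s)))`. -/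
theorem stmt13 (A : Lp ℝ 2 mu01 →L[ℝ] Lp ℝ 2 mu01) (c : ℝ) (hc : 0 < c)
    (hG : ∀ f g : Lp ℝ 2 mu01,
      c * (‖f‖ ^ 2 * ‖g‖ ^ 2 - (inner ℝ f g : ℝ) ^ 2)
        ≤ ‖A f‖ ^ 2 * ‖A g‖ ^ 2 - (inner ℝ (A f) (A g) : ℝ) ^ 2)
    (hσ : ∀ t ∈ Set.Ioc (0:ℝ) 1, 0 < ‖A (ind t)‖)
    (s t : ℝ) (hs : 0 < s) (hst : s < t) (ht : t ≤ 1) :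
    1 / (Real.sqrt (1 - |(inner ℝ (A (ind s)) (A (ind t)) : ℝ) / (‖A (ind s)‖ * ‖A (ind t)‖)|)
          * (‖A (ind s)‖ * ‖A (ind t)‖))
      ≤ Real.sqrt 2 / (Real.sqrt c * Real.sqrt (s * (t - s))) := by
  set a := ‖A (ind s)‖ with ha
  set b := ‖A (ind t)‖ with hb
  set p := (inner ℝ (A (ind s)) (A (ind t)) : ℝ) with hp
  have hapos : 0 < a := hσ s ⟨hs, le_of_lt (lt_of_lt_of_le hst ht)⟩
  have hbpos : 0 < b := hσ t ⟨lt_trans hs hst, ht⟩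
  have habpos : 0 < a * b := mul_pos hapos hbpos
  set lam := p / (a * b) with hlam
  have hcs : |p| ≤ a * b := abs_real_inner_le_norm _ _
  have hlam1 : |lam| ≤ 1 := by
    rw [hlam, abs_div, abs_of_pos habpos, div_le_one habpos]
    exact hcs
  -- Gram determinant lower bound
  have hGram : c * (s * (t - s)) ≤ a ^ 2 * b ^ 2 - p ^ 2 := by
    have := hG (ind s) (ind t)
    rw [norm_ind_sq s hs.le (le_trans hst.le ht), norm_ind_sq t (le_trans hs.le hst.le) ht,
      inner_ind s t hs.le hst.le ht] at this
    calc c * (s * (t - s)) = c * (s * t - s ^ 2) := by ring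
    _ ≤ _ := this
  have hp2 : p ^ 2 = lam ^ 2 * (a * b) ^ 2 := by
    rw [hlam]; field_simp
  have hkey : c * (s * (t - s)) ≤ 2 * ((1 - |lam|) * (a * b) ^ 2) := by
    have h1 : a ^ 2 * b ^ 2 - p ^ 2 = (1 - |lam|) * (1 + |lam|) * (a * b) ^ 2 := by
      rw [hp2, ← sq_abs lam]; ring
    have h2 : (1 - |lam|) * (1 + |lam|) * (a * b) ^ 2
        ≤ 2 * ((1 - |lam|) * (a * b) ^ 2) := by
      have hnn : 0 ≤ (1 - |lam|) * (a * b) ^ 2 :=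
        mul_nonneg (by linarith) (sq_nonneg _)
      nlinarith [abs_nonneg lam]
    linarith [hGram.trans_eq h1]
  have hsts : 0 < s * (t - s) := mul_pos hs (by linarith)
  -- sqrt comparison
  have hsqrt : Real.sqrt c * Real.sqrt (s * (t - s))
      ≤ Real.sqrt 2 * (Real.sqrt (1 - |lam|) * (a * b)) := by
    have h1 : Real.sqrt c * Real.sqrt (s * (t - s)) = Real.sqrt (c * (s * (t - s))) :=
      (Real.sqrt_mul hc.le _).symm
    have h2 : Real.sqrt 2 * (Real.sqrt (1 - |lam|) * (a * b))
        = Real.sqrt (2 * ((1 - |lam|) * (a * b) ^ 2)) := by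
      rw [Real.sqrt_mul (by norm_num), Real.sqrt_mul (by linarith)]
      rw [Real.sqrt_sq habpos.le]
    rw [h1, h2]
    exact Real.sqrt_le_sqrt hkey
  have hXpos : 0 < Real.sqrt (1 - |lam|) * (a * b) := by
    have hlamlt : 0 < 1 - |lam| := by
      by_contra h
      push_neg at h
      have h0 : (1 - |lam|) * (a * b) ^ 2 ≤ 0 :=
        mul_nonpos_of_nonpos_of_nonneg (by linarith) (sq_nonneg _)
      nlinarith
    exact mul_pos (Real.sqrt_pos.mpr hlamlt) habpos
  have hYpos : 0 < Real.sqrt c * Real.sqrt (s * (t - s)) :=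
    mul_pos (Real.sqrt_pos.mpr hc) (Real.sqrt_pos.mpr hsts)
  rw [div_le_div_iff₀ hXpos hYpos]
  linarith
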